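/- Let ρ be an N²×N² positive semidefinite matrix with trace 1, indexed by pairs (m,μ) with m,μ ∈ {1,…,N}, whose partial transpose ρ^{T_A} (swapping the first indices: entry ((m,μ),(n,ν)) ↦ entry ((n,μ),(m,ν))) is also positive semidefinite. Then (∏_{j,k=1}^N |ρ_{(j,j),(k,k)}|)^{1/N} ≤ N^{−2N}. -/

import Mathlib

open scoped ComplexOrder in
lemma psd_entry_sq_le {n : Type*} [Fintype n] [DecidableEq n] {M : Matrix n n ℂ}
    (hM : M.PosSemidef) (p q : n) :
    ‖M p q‖ ^ 2 ≤ (M p p).re * (M q q).re := by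
  have hdiag : ∀ r, 0 ≤ M r r := fun r => by
    exact hM.diag_nonneg
  have hre : ∀ r, 0 ≤ (M r r).re := fun r => (Complex.le_def.mp (hdiag r)).1
  have him : ∀ r, (M r r).im = 0 := fun r => ((Complex.le_def.mp (hdiag r)).2).symm
  rcases eq_or_ne p q with rfl | hpq
  · have : ‖M p p‖ = (M p p).re := by
      rw [Complex.norm_def, Complex.normSq_apply, him p, mul_zero, add_zero,
        Real.sqrt_mul_self (hre p)]
    rw [this, sq]
  · set c := M p q with hc
    have hqp : M q p = starRingEnd ℂ c := (hM.1.apply q p).symm ▸ rfl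
    have key : ∀ s : ℝ, 0 ≤ (M p p).re * (s * s) + (-2 * ‖c‖^2) * s + ‖c‖^2 * (M q q).re := by
      intro s
      have h := hM.re_dotProduct_nonneg (Pi.single p (s : ℂ) + Pi.single q (-(starRingEnd ℂ c)))
      simp only [Matrix.mulVec_add, Matrix.mulVec_single, star_add, add_dotProduct,
        dotProduct_add, ← Pi.single_star, single_dotProduct, Pi.add_apply, Pi.smul_apply,
        Matrix.col_apply, op_smul_eq_mul] at h
      rw [← hc, hqp] at h
      have hn : ‖c‖ ^ 2 = c.re * c.re + c.im * c.im := by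
        rw [Complex.sq_norm, Complex.normSq_apply]
      simp only [RCLike.re_to_complex, Complex.star_def, Complex.conj_ofReal, map_neg,
        Complex.conj_conj, Complex.add_re, Complex.mul_re, Complex.mul_im, Complex.neg_re,
        Complex.neg_im, Complex.conj_re, Complex.conj_im, Complex.ofReal_re,
        Complex.ofReal_im] at h
      rw [him p, him q] at h
      ring_nf at h ⊢
      rw [hn]
      ring_nf
      linarith [h]
    have hd := discrim_le_zero key
    rw [discrim] at hd
    rcases eq_or_ne c 0 with h0 | h0
    · rw [h0]; simpa using mul_nonneg (hre p) (hre q)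
    · have hc0 : 0 < ‖c‖ ^ 2 := pow_pos (norm_pos_iff.mpr h0) 2
      by_contra hcon
      push_neg at hcon
      exact absurd (by nlinarith [hd] : ‖c‖^2 * (‖c‖^2 - (M p p).re * (M q q).re) ≤ 0)
        (not_le.mpr (mul_pos hc0 (sub_pos.mpr hcon)))

open Finset in
open scoped ComplexOrder in
/-- If a bipartite density matrix `ρ` on `ℂ^N ⊗ ℂ^N` has positive partial transpose,
then `(∏_{j,k} |ρ_{(j,j),(k,k)}|)^{1/N} ≤ N^{-2N}`. -/
theorem collectibility_PPT_bound {N : ℕ} (hN : 0 < N)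
    (ρ : Matrix (Fin N × Fin N) (Fin N × Fin N) ℂ)
    (hρ : ρ.PosSemidef) (htr : ρ.trace = 1)
    (hPPT : (Matrix.of fun p q : Fin N × Fin N => ρ (q.1, p.2) (p.1, q.2)).PosSemidef) :
    (∏ j : Fin N, ∏ k : Fin N, ‖ρ (j, j) (k, k)‖) ^ ((1 : ℝ) / N)
      ≤ (N : ℝ) ^ (-(2 * N : ℝ)) := by
  have hNR : (0:ℝ) < N := by exact_mod_cast hN
  set d : Fin N × Fin N → ℝ := fun p => (ρ p p).re with hd
  have hd0 : ∀ p, 0 ≤ d p := fun p => by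
    have h := hρ.diag_nonneg (i := p)
    exact (Complex.le_def.mp h).1
  have hsum : ∑ p, d p = 1 := by
    have := congrArg Complex.re htr
    simpa [Matrix.trace, Matrix.diag, Complex.re_sum, hd] using this
  -- entry bound
  have hentry : ∀ j k : Fin N, ‖ρ (j, j) (k, k)‖ ^ 2 ≤ d (k, j) * d (j, k) := by
    intro j k
    have := psd_entry_sq_le hPPT (k, j) (j, k)
    simpa using this
  set Q : ℝ := ∏ p, d p with hQ
  have hQ0 : 0 ≤ Q := Finset.prod_nonneg fun p _ => hd0 p
  -- P ≤ Q
  set P : ℝ := ∏ j : Fin N, ∏ k : Fin N, ‖ρ (j, j) (k, k)‖ with hP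
  have hP0 : 0 ≤ P :=
    Finset.prod_nonneg fun j _ => Finset.prod_nonneg fun k _ => norm_nonneg _
  have hPQ : P ≤ Q := by
    have hP2 : P ^ 2 ≤ Q ^ 2 := by
      have h1 : P ^ 2 = ∏ p : Fin N × Fin N, ‖ρ (p.1, p.1) (p.2, p.2)‖ ^ 2 := by
        rw [hP, ← Fintype.prod_prod_type']
        rw [← Finset.prod_pow]
      have h2 : (∏ p : Fin N × Fin N, ‖ρ (p.1, p.1) (p.2, p.2)‖ ^ 2)
          ≤ ∏ p : Fin N × Fin N, d (p.2, p.1) * d (p.1, p.2) :=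
        Finset.prod_le_prod (fun p _ => sq_nonneg _) (fun p _ => hentry p.1 p.2)
      have h3 : (∏ p : Fin N × Fin N, d (p.2, p.1) * d (p.1, p.2)) = Q ^ 2 := by
        rw [Finset.prod_mul_distrib, sq, hQ]
        congr 1
        exact Fintype.prod_equiv (Equiv.prodComm _ _) _ _ (fun p => rfl)
      calc P ^ 2 = _ := h1
        _ ≤ _ := h2
        _ = Q ^ 2 := h3
    exact le_of_pow_le_pow_left₀ two_ne_zero hQ0 hP2
  -- AM-GM: Q ≤ (N*N : ℝ)⁻¹ ^ (N*N)
  have hcard : (Fintype.card (Fin N × Fin N) : ℝ) = (N : ℝ) * N := by simp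
  have hAMGM : Q ≤ ((N : ℝ) * N)⁻¹ ^ (N * N) := by
    have hw := Real.geom_mean_le_arith_mean_weighted Finset.univ
      (fun _ => ((N : ℝ) * N)⁻¹) d (fun i _ => by positivity)
      (by simp [Finset.card_univ]; field_simp) (fun i _ => hd0 i)
    rw [← Finset.mul_sum, hsum, mul_one] at hw
    have hprod : (∏ p : Fin N × Fin N, d p ^ (((N : ℝ) * N)⁻¹ : ℝ)) = Q ^ (((N : ℝ) * N)⁻¹ : ℝ) := by
      rw [hQ, ← Real.finset_prod_rpow _ _ (fun p _ => hd0 p)]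
    rw [hprod] at hw
    have : (Q ^ (((N : ℝ) * N)⁻¹ : ℝ)) ^ ((N * N : ℕ) : ℝ) ≤ (((N : ℝ) * N)⁻¹) ^ ((N * N : ℕ) : ℝ) :=
      Real.rpow_le_rpow (Real.rpow_nonneg hQ0 _) hw (by positivity)
    rw [← Real.rpow_mul hQ0, Real.rpow_natCast] at this
    have he : ((N : ℝ) * N)⁻¹ * ((N * N : ℕ) : ℝ) = 1 := by
      push_cast; field_simp
    rw [he, Real.rpow_one] at this
    exact this
  have hNne : (N : ℝ) ≠ 0 := hNR.ne'
  have hbase : ((N : ℝ) * N)⁻¹ = (N : ℝ) ^ (-2 : ℝ) := by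
    rw [Real.rpow_neg hNR.le, Real.rpow_two, sq]
  calc P ^ ((1:ℝ)/N) ≤ Q ^ ((1:ℝ)/N) := Real.rpow_le_rpow hP0 hPQ (by positivity)
    _ ≤ (((N : ℝ) * N)⁻¹ ^ (N * N)) ^ ((1:ℝ)/N) :=
        Real.rpow_le_rpow hQ0 hAMGM (by positivity)
    _ = (N : ℝ) ^ (-(2 * N : ℝ)) := by
        rw [hbase, ← Real.rpow_natCast ((N:ℝ) ^ (-2:ℝ)) (N*N), ← Real.rpow_mul hNR.le,
          ← Real.rpow_mul hNR.le]
        congr 1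
        push_cast
        field_simp
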